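/- Let κ be an uncountable regular cardinal with κ^{<κ} = κ and let G be a totally ordered abelian group of degree κ. Then every closed subspace of a G-Polish space is G-Polish. -/

import Mathlib

open Cardinal TopologicalSpace

/-- A `G`-metric on `X`: values in `G⁺ ∪ {0}` with the usual distance axioms. -/
def IsGMetric {X G : Type} [AddCommGroup G] [LinearOrder G] [IsOrderedAddMonoid G] (d : X → X → G) : Prop :=
  (∀ x y, 0 ≤ d x y) ∧ (∀ x y, d x y = 0 ↔ x = y) ∧ (∀ x y, d x y = d y x) ∧
    (∀ x y z, d x z ≤ d x y + d y z)

/-- The topology induced by a `G`-metric, generated by its open balls. -/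
def ballTopology {X G : Type} [AddCommGroup G] [LinearOrder G] [IsOrderedAddMonoid G] (d : X → X → G) :
    TopologicalSpace X :=
  TopologicalSpace.generateFrom {s | ∃ x ε, 0 < ε ∧ s = {y | d x y < ε}}

/-- `d` is Cauchy-complete for `κ`-indexed sequences (`κ` realized by the order `K`). -/
def IsCauchyComplete (K : Type) {X G : Type} [LinearOrder K]
    [AddCommGroup G] [LinearOrder G] [IsOrderedAddMonoid G] (d : X → X → G) : Prop :=
  ∀ x : K → X,
    (∀ ε : G, 0 < ε → ∃ α : K, ∀ β γ : K, α ≤ β → α ≤ γ → d (x β) (x γ) < ε) →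
    ∃ y : X, ∀ ε : G, 0 < ε → ∃ α : K, ∀ β : K, α ≤ β → d (x β) y < ε

/-- `X` is `G`-Polish: weight `≤ κ` and completely `G`-metrizable. -/
def IsGPolish (K G : Type) (X : Type) [LinearOrder K] [AddCommGroup G] [LinearOrder G] [IsOrderedAddMonoid G]
    [t : TopologicalSpace X] : Prop :=
  (∃ B : Set (Set X), TopologicalSpace.IsTopologicalBasis B ∧
      Cardinal.mk B ≤ Cardinal.mk K) ∧
  ∃ d : X → X → G, IsGMetric d ∧ ballTopology d = t ∧ IsCauchyComplete K d

/-- Auxiliary: in `ballTopology d`, every open set contains a ball around each of its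
points. -/
theorem exists_ball_subset {X G : Type} [AddCommGroup G] [LinearOrder G] [IsOrderedAddMonoid G] {d : X → X → G}
    (hd : IsGMetric d) (hpos : ∃ ε : G, 0 < ε) {U : Set X}
    (hU : (ballTopology d).IsOpen U) :
    ∀ y ∈ U, ∃ ε : G, 0 < ε ∧ {z | d y z < ε} ⊆ U := by
  obtain ⟨hd0, hdeq, hdsymm, hdtri⟩ := hd
  induction hU with
  | basic s hs =>
    obtain ⟨x, ε, hε, rfl⟩ := hs
    intro y hy
    refine ⟨ε - d x y, by simpa using hy, fun z hz => ?_⟩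
    simp only [Set.mem_setOf_eq] at hz ⊢
    calc d x z ≤ d x y + d y z := hdtri x y z
      _ < d x y + (ε - d x y) := by exact add_lt_add_right hz _
      _ = ε := by abel
  | univ => exact fun y _ => ⟨hpos.choose, hpos.choose_spec, Set.subset_univ _⟩
  | inter s t _ _ ihs iht =>
    intro y hy
    obtain ⟨ε1, h1, hs1⟩ := ihs y hy.1
    obtain ⟨ε2, h2, hs2⟩ := iht y hy.2
    exact ⟨min ε1 ε2, lt_min h1 h2,
      fun z hz => ⟨hs1 (lt_of_lt_of_le hz (min_le_left _ _)),
        hs2 (lt_of_lt_of_le hz (min_le_right _ _))⟩⟩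
  | sUnion S _ ih =>
    intro y hy
    obtain ⟨s, hsS, hys⟩ := hy
    obtain ⟨ε, hε, hsub⟩ := ih s hsS y hys
    exact ⟨ε, hε, hsub.trans (Set.subset_sUnion_of_mem hsS)⟩

/-- Auxiliary: a set containing a ball around each of its points is open in
`ballTopology d`. -/
theorem isOpen_of_ball {X G : Type} [AddCommGroup G] [LinearOrder G] [IsOrderedAddMonoid G] {d : X → X → G}
    (hd : IsGMetric d) {U : Set X}
    (h : ∀ y ∈ U, ∃ ε : G, 0 < ε ∧ {z | d y z < ε} ⊆ U) :
    (ballTopology d).IsOpen U := by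
  obtain ⟨hd0, hdeq, hdsymm, hdtri⟩ := hd
  choose! ε hε hsub using h
  have hU : U = ⋃₀ ((fun y => {z | d y z < ε y}) '' U) := by
    ext z
    constructor
    · intro hz
      refine ⟨{w | d z w < ε z}, ⟨z, hz, rfl⟩, ?_⟩
      simp only [Set.mem_setOf_eq]
      rw [(hdeq z z).2 rfl]
      exact hε z hz
    · rintro ⟨s, ⟨y, hy, rfl⟩, hzs⟩
      exact hsub y hy hzs
  rw [hU]
  exact TopologicalSpace.GenerateOpen.sUnion _ (by
    rintro s ⟨y, hy, rfl⟩
    exact TopologicalSpace.GenerateOpen.basic _ ⟨y, ε y, hε y hy, rfl⟩)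

/-- Let `κ` be an uncountable regular cardinal with `κ^{<κ} = κ` and `G` a
totally ordered abelian group of degree `κ`.  Then every closed subspace of a `G`-Polish
space is `G`-Polish. -/
theorem closed_subspace_GPolish {K G X : Type} [LinearOrder K] [WellFoundedLT K]
    [AddCommGroup G] [LinearOrder G] [IsOrderedAddMonoid G] [TopologicalSpace X]
    (huncount : Cardinal.aleph0 < Cardinal.mk K) (hreg : (Cardinal.mk K).IsRegular)
    (hpow : (Cardinal.mk K) ^< (Cardinal.mk K) = Cardinal.mk K)
    (r : K → G) (hrdec : StrictAnti r) (hrpos : ∀ α, 0 < r α)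
    (hrcoinitial : ∀ ε : G, 0 < ε → ∃ α, r α ≤ ε)
    (hX : IsGPolish K G X) (Y : Set X) (hY : IsClosed Y) :
    IsGPolish K G Y := by
  obtain ⟨⟨B, hB, hBcard⟩, d, hd, hdtop, hdcomp⟩ := hX
  have hK : Nonempty K := by
    rw [← Cardinal.mk_ne_zero_iff]
    exact fun h => by simp [h] at huncount
  obtain ⟨α0⟩ := hK
  have hpos : ∃ ε : G, 0 < ε := ⟨r α0, hrpos α0⟩
  set d' : Y → Y → G := fun a b => d a b with hd'
  have hd'metric : IsGMetric d' := by
    obtain ⟨hd0, hdeq, hdsymm, hdtri⟩ := hd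
    exact ⟨fun a b => hd0 a b,
      fun a b => (hdeq a b).trans ⟨fun h => Subtype.ext h, fun h => by rw [h]⟩,
      fun a b => hdsymm a b, fun a b c => hdtri a b c⟩
  refine ⟨⟨(fun s => (Subtype.val : Y → X) ⁻¹' s) '' B, hB.induced _,
      le_trans Cardinal.mk_image_le hBcard⟩, d', hd'metric, ?_, ?_⟩
  · -- topology
    apply TopologicalSpace.ext_iff.2
    intro U
    constructor
    · -- open in ballTopology d' → open in subspace topology
      intro hU
      -- U contains a d'-ball around each of its points
      have h1 := exists_ball_subset hd'metric hpos hU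
      -- the saturation of U in X
      set V : Set X := {x | ∃ h : x ∈ Y, ∃ ε : G, 0 < ε ∧
        {z : Y | d' ⟨x, h⟩ z < ε} ⊆ U} with hV
      have hUV : U = Subtype.val ⁻¹' (V ∪ Yᶜ) ∩ Subtype.val ⁻¹' Y := by
        ext ⟨z, hz⟩
        simp only [Set.mem_inter_iff, Set.mem_preimage, Set.mem_union, Set.mem_compl_iff]
        constructor
        · intro hzU
          obtain ⟨ε, hε, hsub⟩ := h1 _ hzU
          exact ⟨Or.inl ⟨hz, ε, hε, hsub⟩, hz⟩
        · rintro ⟨(⟨h, ε, hε, hsub⟩ | hc), hz'⟩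
          · apply hsub
            show d' ⟨z, h⟩ ⟨z, hz⟩ < ε
            have : d z z = 0 := (hd.2.1 z z).2 rfl
            simpa [d', this] using hε
          · exact absurd hz hc
      rw [hUV]
      refine IsOpen.inter (IsOpen.preimage continuous_subtype_val ?_)
        (by simpa using IsOpen.preimage continuous_subtype_val hY.isOpen_compl.union rfl ▸
          (isOpen_univ.inter (isOpen_univ)))
      -- V ∪ Yᶜ is open in X
      rw [← hdtop]
      apply isOpen_of_ball hd
      rintro y (⟨hyY, ε, hε, hsub⟩ | hyc)
      · refine ⟨ε, hε, fun z hz => ?_⟩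
        by_cases hzY : z ∈ Y
        · left
          refine ⟨hzY, ε - d y z, by simpa using hz, fun w hw => ?_⟩
          apply hsub
          show d y w < ε
          have hw' : d z (w : X) < ε - d y z := hw
          calc d y (w : X) ≤ d y z + d z w := hd.2.2.2 y z w
            _ < d y z + (ε - d y z) := add_lt_add_right hw' _
            _ = ε := by abel
        · exact Or.inr hzY
      · -- y ∉ Y : Yᶜ is open (in t = ballTopology d), find ball
        have hYc : (ballTopology d).IsOpen Yᶜ := by rw [hdtop]; exact hY.isOpen_compl
        obtain ⟨ε, hε, hsub⟩ := exists_ball_subset hd hpos hYc y hyc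
        exact ⟨ε, hε, fun z hz => Or.inr (hsub hz)⟩
    · -- open in subspace topology → open in ballTopology d'
      rintro hU
      obtain ⟨V, hV, rfl⟩ := hU
      rw [← hdtop] at hV
      apply isOpen_of_ball hd'metric
      rintro ⟨y, hy⟩ hyU
      obtain ⟨ε, hε, hsub⟩ := exists_ball_subset hd hpos hV y hyU
      exact ⟨ε, hε, fun z hz => hsub hz⟩
  · -- completeness
    intro x hx
    obtain ⟨y, hy⟩ := hdcomp (fun β => (x β : X)) hx
    have hyY : y ∈ Y := by
      by_contra hyc
      have hYc : (ballTopology d).IsOpen Yᶜ := by rw [hdtop]; exact hY.isOpen_compl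
      obtain ⟨ε, hε, hsub⟩ := exists_ball_subset hd hpos hYc y hyc
      obtain ⟨α, hα⟩ := hy ε hε
      have h1 : d (x α) y < ε := hα α le_rfl
      have h2 : d y (x α) < ε := by rwa [hd.2.2.1]
      exact (hsub h2) (x α).2
    exact ⟨⟨y, hyY⟩, fun ε hε => hy ε hε⟩
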